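/- Difference of gradient descent iterates as a perturbed power iteration: let f : E → ℝ be C² on a real inner product space, H = ∇²f(0), and define two gradient descent sequences s_{j+1} = s_j − η∇f(s_j), s'_{j+1} = s'_j − η∇f(s'_j). Then with ŝ_j = s_j − s'_j one has ŝ_{j+1} = (I − ηH)ŝ_j − ηΔ_jŝ_j, where Δ_j = ∫₀¹ (∇²f(s'_j + θ(s_j − s'_j)) − H) dθ. Moreover, if ‖∇²f(u) − ∇²f(0)‖ ≤ ρ‖u‖ for all u in a convex set containing all iterates, and max{‖s_j‖, ‖s'_j‖} ≤ 𝓛, then ‖Δ_j‖ ≤ ρ𝓛. -/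

import Mathlib

theorem stmt_15 {E : Type*} [NormedAddCommGroup E] [InnerProductSpace ℝ E]
    [FiniteDimensional ℝ E] (f : E → ℝ) (hf : ContDiff ℝ 2 f)
    (η ρ 𝓛 : ℝ) (hη : 0 < η) (hρ : 0 < ρ) (h𝓛 : 0 < 𝓛)
    (H : E →L[ℝ] E) (hHdef : H = fderiv ℝ (gradient f) 0)
    (s s' : ℕ → E)
    (hrec : ∀ k, s (k + 1) = s k - η • gradient f (s k))
    (hrec' : ∀ k, s' (k + 1) = s' k - η • gradient f (s' k))
    (j : ℕ)
    (Δ : E →L[ℝ] E)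
    (hΔdef : Δ = ∫ θ in (0:ℝ)..1,
      (fderiv ℝ (gradient f) (s' j + θ • (s j - s' j)) - H))
    (hHlip : ∀ θ ∈ Set.Icc (0:ℝ) 1,
      ‖fderiv ℝ (gradient f) (s' j + θ • (s j - s' j)) - H‖ ≤
        ρ * ‖s' j + θ • (s j - s' j)‖)
    (hnorms : max ‖s j‖ ‖s' j‖ ≤ 𝓛) :
    s (j + 1) - s' (j + 1) = (1 - η • H) (s j - s' j) - η • Δ (s j - s' j) ∧
      ‖Δ‖ ≤ ρ * 𝓛 := by
  set g := gradient f with hg_def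
  set v := s j - s' j with hv
  have hg : ContDiff ℝ 1 g := by
    have h1 : ContDiff ℝ 1 (fderiv ℝ f) := hf.fderiv_right (by norm_num)
    have h2 : g = fun x => (InnerProductSpace.toDual ℝ E).symm (fderiv ℝ f x) := rfl
    rw [h2]
    exact (InnerProductSpace.toDual ℝ E).symm.contDiff.comp h1
  set c : ℝ → E := fun θ => s' j + θ • v with hc_def
  have hc_cont : Continuous c := by
    exact continuous_const.add (continuous_id.smul continuous_const)
  have hFcont : Continuous (fun θ => fderiv ℝ g (c θ)) :=
    (hg.continuous_fderiv (by norm_num)).comp hc_cont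
  have hInt : IntervalIntegrable (fun θ => fderiv ℝ g (c θ) - H)
      MeasureTheory.volume 0 1 :=
    (hFcont.sub continuous_const).intervalIntegrable 0 1
  have hInt1 : IntervalIntegrable (fun θ => fderiv ℝ g (c θ))
      MeasureTheory.volume 0 1 := hFcont.intervalIntegrable 0 1
  have hIntv : IntervalIntegrable (fun θ => (fderiv ℝ g (c θ)) v)
      MeasureTheory.volume 0 1 :=
    (hFcont.clm_apply continuous_const).intervalIntegrable 0 1
  have hderiv : ∀ θ ∈ Set.uIcc (0:ℝ) 1,
      HasDerivAt (fun t => g (c t)) ((fderiv ℝ g (c θ)) v) θ := by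
    intro θ _
    have h1 : HasDerivAt c v θ := by
      have h0 := ((hasDerivAt_id θ).smul_const v).const_add (s' j)
      rw [one_smul] at h0
      exact h0
    exact ((hg.differentiable (by norm_num) (c θ)).hasFDerivAt).comp_hasDerivAt θ h1
  have hftc : ∫ θ in (0:ℝ)..1, (fderiv ℝ g (c θ)) v = g (s j) - g (s' j) := by
    have := intervalIntegral.integral_eq_sub_of_hasDerivAt hderiv hIntv
    rw [this]
    have hc1 : c 1 = s j := by simp [hc_def, hv]
    have hc0 : c 0 = s' j := by simp [hc_def]
    rw [hc1, hc0]
  have happ : Δ v = (g (s j) - g (s' j)) - H v := by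
    have hDapply : Δ v = ∫ θ in (0:ℝ)..1, ((fderiv ℝ g (c θ) - H) v) := by
      rw [hΔdef]
      exact ContinuousLinearMap.intervalIntegral_apply hInt v
    rw [hDapply]
    have : (fun θ => (fderiv ℝ g (c θ) - H) v)
        = fun θ => (fderiv ℝ g (c θ)) v - H v := by
      funext θ; simp
    rw [this, intervalIntegral.integral_sub hIntv
      (intervalIntegrable_const), hftc]
    simp
  constructor
  · have h1 := hrec j
    have h2 := hrec' j
    rw [h1, h2]
    have hHv : (1 - η • H) v = v - η • H v := by
      simp [ContinuousLinearMap.sub_apply, ContinuousLinearMap.smul_apply]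
    rw [hHv, happ]
    simp only [hv, smul_sub]
    abel
  · rw [hΔdef]
    have hb : ‖∫ θ in (0:ℝ)..1, (fderiv ℝ g (c θ) - H)‖ ≤ ρ * 𝓛 * |1 - 0| := by
      apply intervalIntegral.norm_integral_le_of_norm_le_const
      intro x hx
      rw [Set.uIoc_of_le (by norm_num : (0:ℝ) ≤ 1)] at hx
      have hx' : x ∈ Set.Icc (0:ℝ) 1 := ⟨le_of_lt hx.1, hx.2⟩
      refine le_trans (hHlip x hx') ?_
      have hcx : ‖c x‖ ≤ 𝓛 := by
        have heq : c x = (1 - x) • s' j + x • s j := by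
          simp only [hc_def, hv, smul_sub, sub_smul, one_smul]
          abel
        rw [heq]
        calc ‖(1 - x) • s' j + x • s j‖
            ≤ ‖(1 - x) • s' j‖ + ‖x • s j‖ := norm_add_le _ _
          _ = (1 - x) * ‖s' j‖ + x * ‖s j‖ := by
              rw [norm_smul, norm_smul, Real.norm_eq_abs, Real.norm_eq_abs,
                abs_of_nonneg (by linarith [hx'.2]), abs_of_nonneg hx'.1]
          _ ≤ (1 - x) * 𝓛 + x * 𝓛 := by
              have hs : ‖s j‖ ≤ 𝓛 := le_trans (le_max_left _ _) hnorms
              have hs' : ‖s' j‖ ≤ 𝓛 := le_trans (le_max_right _ _) hnorms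
              have h1x : (0:ℝ) ≤ 1 - x := by linarith [hx'.2]
              exact add_le_add (mul_le_mul_of_nonneg_left hs' h1x)
                (mul_le_mul_of_nonneg_left hs hx'.1)
          _ = 𝓛 := by ring
      exact mul_le_mul_of_nonneg_left hcx (le_of_lt hρ)
    simpa using hb
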